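/- Let λ ∈ (0,1) and set t_0 := −log 2 / log λ. Define P : ℝ → ℝ by P(t) = log((1−λ)^t/(1−λ^t)) for t ≥ t_0 and P(t) = log 4 + t·log(λ(1−λ)) for t ≤ t_0. Then P is continuously differentiable on all of ℝ, but P is not twice differentiable at t_0: the second derivative from the left at t_0 equals 0 while the second derivative from the right at t_0 equals 2(log λ)^2 > 0. (Thus the pressure function t ↦ P(−t log|F_λ'|) has a second order phase transition at t_0.) -/

import Mathlib

open MeasureTheory Set Filter Topology

/-- For `lam ∈ (0,1)` and `t₀ = -log 2 / log lam`, the pressure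
function `P`, equal to `log((1-lam)^t/(1-lam^t))` for `t ≥ t₀` and to
`log 4 + t log(lam(1-lam))` for `t ≤ t₀`, is `C¹` on `ℝ` but not twice
differentiable at `t₀`: the second derivative from the left at `t₀` is `0`
while the second derivative from the right is `2 (log lam)² > 0`. -/
theorem stmt14 (lam : ℝ) (h1 : 0 < lam) (h2 : lam < 1)
    (t0 : ℝ) (ht0 : t0 = -Real.log 2 / Real.log lam)
    (P : ℝ → ℝ)
    (hP1 : ∀ t : ℝ, t0 ≤ t → P t = Real.log ((1-lam)^t / (1 - lam^t)))
    (hP2 : ∀ t : ℝ, t ≤ t0 → P t = Real.log 4 + t * Real.log (lam*(1-lam))) :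
    ContDiff ℝ 1 P ∧
    ¬ DifferentiableAt ℝ (deriv P) t0 ∧
    HasDerivWithinAt (deriv P) 0 (Set.Iic t0) t0 ∧
    HasDerivWithinAt (deriv P) (2 * (Real.log lam)^2) (Set.Ici t0) t0 ∧
    0 < 2 * (Real.log lam)^2 := by
  set L := Real.log lam with hL
  have hL0 : L < 0 := Real.log_neg h1 h2
  have hLne : L ≠ 0 := ne_of_lt hL0
  have h1l : 0 < 1 - lam := by linarith
  have ht0pos : 0 < t0 := by
    rw [ht0, neg_div]
    exact neg_pos.mpr (div_neg_of_pos_of_neg (Real.log_pos one_lt_two) hL0)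
  have hpow : ∀ s : ℝ, lam ^ s = Real.exp (L * s) := fun s => Real.rpow_def_of_pos h1 s
  have ht0half : lam ^ t0 = 1/2 := by
    rw [hpow, ht0]
    have h' : L * (-Real.log 2 / L) = -Real.log 2 := by field_simp
    rw [h', Real.exp_neg, Real.exp_log two_pos]
    norm_num
  have hhalf : ∀ s, t0 ≤ s → lam ^ s ≤ 1/2 := fun s hs =>
    ht0half ▸ Real.rpow_le_rpow_of_exponent_ge h1 h2.le hs
  have hposd : ∀ s, t0 ≤ s → 0 < 1 - lam ^ s := fun s hs => by
    have := hhalf s hs; linarith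
  -- slope of the linear piece
  set c := Real.log (lam * (1 - lam)) with hc
  have hcval : c = Real.log (1 - lam) + L := by
    rw [hc, Real.log_mul (ne_of_gt h1) (ne_of_gt h1l)]; ring
  -- derivative of lam ^ t
  have hd : ∀ t : ℝ, HasDerivAt (fun s : ℝ => lam ^ s) (lam ^ t * L) t := by
    intro t
    have := (hasDerivAt_const t lam).rpow (hasDerivAt_id t) h1
    simpa using this
  -- right-hand formula and its derivative
  set Q : ℝ → ℝ := fun t => t * Real.log (1 - lam) - Real.log (1 - lam ^ t) with hQdef
  have hPQ : ∀ t, t0 ≤ t → P t = Q t := by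
    intro t ht
    rw [hP1 t ht, hQdef]
    rw [Real.log_div (ne_of_gt (Real.rpow_pos_of_pos h1l t)) (ne_of_gt (hposd t ht)),
      Real.log_rpow h1l]
  have hQd : ∀ t : ℝ, 0 < 1 - lam ^ t →
      HasDerivAt Q (Real.log (1 - lam) + lam ^ t * L / (1 - lam ^ t)) t := by
    intro t hne
    have h3 : HasDerivAt (fun s : ℝ => 1 - lam ^ s) (-(lam ^ t * L)) t := (hd t).const_sub 1
    have h4 := (h3.log (ne_of_gt hne))
    have h5 := (hasDerivAt_mul_const (Real.log (1 - lam))).sub h4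
    refine h5.congr_deriv ?_
    ring
  -- linear piece
  set G : ℝ → ℝ := fun t => Real.log 4 + t * c with hGdef
  have hGd : ∀ t : ℝ, HasDerivAt G c t := fun t =>
    (hasDerivAt_mul_const c).const_add (Real.log 4)
  -- the derivative function
  set D : ℝ → ℝ := fun t => Real.log (1 - lam) + lam ^ max t t0 * L / (1 - lam ^ max t t0)
    with hDdef
  have hDle : ∀ t, t ≤ t0 → D t = c := by
    intro t ht
    simp only [hDdef, max_eq_right ht, ht0half, hcval]
    ring
  have hDge : ∀ t, t0 ≤ t → D t = Real.log (1 - lam) + lam ^ t * L / (1 - lam ^ t) := by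
    intro t ht
    simp only [hDdef, max_eq_left ht]
  -- P has derivative D everywhere
  have hPd : ∀ t : ℝ, HasDerivAt P (D t) t := by
    intro t
    rcases lt_trichotomy t t0 with h | h | h
    · rw [hDle t h.le]
      refine (hGd t).congr_of_eventuallyEq ?_
      filter_upwards [Iio_mem_nhds h] with s hs
      exact hP2 s (le_of_lt hs)
    · subst h
      rw [hDle t le_rfl]
      have hleft : HasDerivWithinAt P c (Set.Iic t) t := by
        refine ((hGd t).hasDerivWithinAt).congr (fun s hs => hP2 s hs) (hP2 t le_rfl)
      have hright : HasDerivWithinAt P c (Set.Ici t) t := by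
        have h6 := hQd t (hposd t le_rfl)
        have h7 : Real.log (1 - lam) + lam ^ t * L / (1 - lam ^ t) = c := by
          rw [ht0half, hcval]; ring
        rw [h7] at h6
        exact (h6.hasDerivWithinAt).congr (fun s hs => hPQ s hs) (hPQ t le_rfl)
      have := hleft.union hright
      rw [Set.Iic_union_Ici] at this
      exact hasDerivWithinAt_univ.mp this
    · rw [hDge t h.le]
      refine (hQd t (hposd t h.le)).congr_of_eventuallyEq ?_
      filter_upwards [Ioi_mem_nhds h] with s hs
      exact hPQ s (le_of_lt hs)
  have hderivP : deriv P = D := funext fun t => (hPd t).deriv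
  -- continuity of D
  have cmax : Continuous fun s : ℝ => lam ^ max s t0 := by
    simp only [hpow]
    exact Real.continuous_exp.comp (continuous_const.mul (continuous_id.max continuous_const))
  have hDcont : Continuous D := by
    refine continuous_const.add ((cmax.mul continuous_const).div
      (continuous_const.sub cmax) fun s => ne_of_gt (hposd _ (le_max_right s t0)))
  have hC1 : ContDiff ℝ 1 P := by
    rw [contDiff_one_iff_deriv]
    exact ⟨fun t => (hPd t).differentiableAt, hderivP ▸ hDcont⟩
  -- second derivative from the left
  have hleft2 : HasDerivWithinAt (deriv P) 0 (Set.Iic t0) t0 := by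
    rw [hderivP]
    exact ((hasDerivWithinAt_const t0 _ c).congr (fun s hs => hDle s hs) (hDle t0 le_rfl))
  -- second derivative from the right
  have hsq : (0:ℝ) < 2 * L ^ 2 := by nlinarith
  have hright2 : HasDerivWithinAt (deriv P) (2 * L ^ 2) (Set.Ici t0) t0 := by
    rw [hderivP]
    have h8 : HasDerivAt (fun t => Real.log (1 - lam) + lam ^ t * L / (1 - lam ^ t))
        (2 * L ^ 2) t0 := by
      have hden := hposd t0 le_rfl
      have h9 := (((hd t0).mul_const L).div ((hd t0).const_sub 1)
        (ne_of_gt hden)).const_add (Real.log (1 - lam))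
      refine h9.congr_deriv ?_
      rw [ht0half]
      norm_num
      ring
    exact (h8.hasDerivWithinAt).congr (fun s hs => hDge s hs) (hDge t0 le_rfl)
  have hnd : ¬ DifferentiableAt ℝ (deriv P) t0 := by
    intro hdiff
    have h10 := hdiff.hasDerivAt
    have e1 : derivWithin (deriv P) (Set.Iic t0) t0 = 0 :=
      hleft2.derivWithin (uniqueDiffOn_Iic t0 t0 Set.self_mem_Iic)
    have e2 : derivWithin (deriv P) (Set.Iic t0) t0 = deriv (deriv P) t0 :=
      (h10.hasDerivWithinAt).derivWithin (uniqueDiffOn_Iic t0 t0 Set.self_mem_Iic)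
    have e3 : derivWithin (deriv P) (Set.Ici t0) t0 = 2 * L ^ 2 :=
      hright2.derivWithin (uniqueDiffOn_Ici t0 t0 Set.self_mem_Ici)
    have e4 : derivWithin (deriv P) (Set.Ici t0) t0 = deriv (deriv P) t0 :=
      (h10.hasDerivWithinAt).derivWithin (uniqueDiffOn_Ici t0 t0 Set.self_mem_Ici)
    have : (0:ℝ) = 2 * L ^ 2 := by rw [← e1, e2, ← e4, e3]
    linarith
  exact ⟨hC1, hnd, hleft2, hright2, hsq⟩
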